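/- Let X and Y be n×n positive semidefinite complex matrices, let a ≥ 0, and define g_a(x) = a·x + x²/(x+1) for x ≥ 0. Then for every index k, Σ_{j=1}^k λ_j↓(g_a(Y)) ≤ Σ_{j=1}^k λ_j↓(g_a(X + Y) − g_a(X)); that is, the eigenvalues of g_a(Y) are weakly majorised by the eigenvalues of g_a(X+Y) − g_a(X). -/

import Mathlib

open Matrix
open scoped ComplexOrder

/-- The eigenvalues of a square matrix, sorted in non-increasing order
(junk value `0` if the matrix is not Hermitian). -/
noncomputable def eigValsDown {𝕜 : Type*} [RCLike 𝕜] {n : ℕ}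
    (A : Matrix (Fin n) (Fin n) 𝕜) : Fin n → ℝ :=
  if hA : A.IsHermitian then
    fun k => (hA.eigenvalues ∘ Tuple.sort hA.eigenvalues) k.rev
  else 0

/-- Functional calculus: apply a real function to a Hermitian matrix via its spectral
decomposition (junk value `0` if the matrix is not Hermitian). -/
noncomputable def matFun {𝕜 : Type*} [RCLike 𝕜] {n : ℕ} (h : ℝ → ℝ)
    (A : Matrix (Fin n) (Fin n) 𝕜) : Matrix (Fin n) (Fin n) 𝕜 :=
  if hA : A.IsHermitian then
    (hA.eigenvectorUnitary : Matrix (Fin n) (Fin n) 𝕜) *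
      Matrix.diagonal (fun i => (h (hA.eigenvalues i) : 𝕜)) *
      star (hA.eigenvectorUnitary : Matrix (Fin n) (Fin n) 𝕜)
  else 0

/-- The operator norm (largest singular value) of a matrix. -/
noncomputable def opNorm {𝕜 : Type*} [RCLike 𝕜] {n : ℕ}
    (A : Matrix (Fin n) (Fin n) 𝕜) : ℝ :=
  ‖Matrix.toEuclideanCLM (𝕜 := 𝕜) A‖

/-- The matrix absolute value `|M| = (Mᴴ M)^(1/2)`. -/
noncomputable def matAbs {𝕜 : Type*} [RCLike 𝕜] {n : ℕ}
    (A : Matrix (Fin n) (Fin n) 𝕜) : Matrix (Fin n) (Fin n) 𝕜 :=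
  let hA := (Matrix.posSemidef_conjTranspose_mul_self A).1
  (hA.eigenvectorUnitary : Matrix (Fin n) (Fin n) 𝕜) *
    Matrix.diagonal ((↑) ∘ Real.sqrt ∘ hA.eigenvalues) *
    (star hA.eigenvectorUnitary : Matrix (Fin n) (Fin n) 𝕜)

/-- The Ky Fan `k`-norm: the sum of the `k` largest singular values. -/
noncomputable def kyFanNorm {𝕜 : Type*} [RCLike 𝕜] {n : ℕ} (k : ℕ)
    (A : Matrix (Fin n) (Fin n) 𝕜) : ℝ :=
  ∑ j ∈ Finset.univ.filter (fun j : Fin n => (j : ℕ) < k), eigValsDown (matAbs A) j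

namespace Stmt9Aux

variable {n : ℕ}

local notation "Mn" => Matrix (Fin n) (Fin n) ℂ

/-- real diagonal as complex matrix -/
noncomputable def rdiag (d : Fin n → ℝ) : Mn := Matrix.diagonal (fun i => (d i : ℂ))

lemma triple_apply (U W : Mn) (d : Fin n → ℝ) (x y : Fin n) :
    (U * rdiag d * Wᴴ) x y = ∑ i, U x i * (d i : ℂ) * (starRingEnd ℂ) (W y i) := by
  rw [Matrix.mul_apply]
  refine Finset.sum_congr rfl fun i _ => ?_
  simp [rdiag, Matrix.mul_diagonal, Matrix.conjTranspose_apply]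

lemma perm_decomp (U : Mn) (d : Fin n → ℝ) (τ : Equiv.Perm (Fin n)) :
    (U.submatrix id ⇑τ) * rdiag (d ∘ ⇑τ) * (U.submatrix id ⇑τ)ᴴ = U * rdiag d * Uᴴ := by
  ext x y
  rw [triple_apply, triple_apply]
  exact Equiv.sum_comp τ (fun i => U x i * (d i : ℂ) * (starRingEnd ℂ) (U y i))

lemma perm_unitary_left (U : Mn) (τ : Equiv.Perm (Fin n)) (h : Uᴴ * U = 1) :
    (U.submatrix id ⇑τ)ᴴ * (U.submatrix id ⇑τ) = 1 := by
  ext a b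
  have := congrFun (congrFun h (τ a)) (τ b)
  simp only [Matrix.mul_apply, Matrix.conjTranspose_apply, Matrix.submatrix_apply, id_eq] at *
  rw [this]
  simp [Matrix.one_apply, EmbeddingLike.apply_eq_iff_eq]

lemma perm_unitary_right (U : Mn) (τ : Equiv.Perm (Fin n)) (h : U * Uᴴ = 1) :
    (U.submatrix id ⇑τ) * (U.submatrix id ⇑τ)ᴴ = 1 := by
  ext x y
  have := congrFun (congrFun h x) y
  simp only [Matrix.mul_apply, Matrix.conjTranspose_apply, Matrix.submatrix_apply, id_eq] at *
  rw [← this]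
  exact Equiv.sum_comp τ (fun i => U x i * (starRingEnd ℂ) (U y i))

lemma dot_star_self (w : Fin n → ℂ) :
    star w ⬝ᵥ w = ((∑ i, Complex.normSq (w i) : ℝ) : ℂ) := by
  simp only [dotProduct, Pi.star_apply, Complex.ofReal_sum]
  exact Finset.sum_congr rfl fun i _ => (Complex.normSq_eq_conj_mul_self (z := w i)).symm

lemma diag_qf (d : Fin n → ℝ) (u : Fin n → ℂ) :
    star u ⬝ᵥ (rdiag d *ᵥ u) = ((∑ i, d i * Complex.normSq (u i) : ℝ) : ℂ) := by
  simp only [dotProduct, Pi.star_apply, Complex.ofReal_sum, rdiag, Matrix.mulVec_diagonal]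
  refine Finset.sum_congr rfl fun i _ => ?_
  rw [Complex.ofReal_mul, Complex.normSq_eq_conj_mul_self, starRingEnd_apply]
  ring

/-- quadratic form of U * rdiag d * Uᴴ at x, assuming UᴴU = 1 -/
lemma decomp_qf (U : Mn) (d : Fin n → ℝ) (x : Fin n → ℂ) :
    star x ⬝ᵥ ((U * rdiag d * Uᴴ) *ᵥ x)
      = ((∑ i, d i * Complex.normSq ((Uᴴ *ᵥ x) i) : ℝ) : ℂ) := by
  rw [← diag_qf d (Uᴴ *ᵥ x)]
  rw [← Matrix.mulVec_mulVec, ← Matrix.mulVec_mulVec]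
  rw [Matrix.dotProduct_mulVec (star x) U]
  have h : star x ᵥ* U = star (Uᴴ *ᵥ x) := by
    rw [Matrix.star_mulVec, Matrix.conjTranspose_conjTranspose]
  rw [h]

lemma star_dot_mulVec_conjT (G : Mn) (x : Fin n → ℂ) (w : Fin n → ℂ) :
    star x ⬝ᵥ (Gᴴ *ᵥ w) = star (G *ᵥ x) ⬝ᵥ w := by
  rw [Matrix.star_mulVec, Matrix.dotProduct_mulVec]

lemma norm_mulVec_unitary (V : Mn) (hV : V * Vᴴ = 1) (y : Fin n → ℂ) :
    ∑ i, Complex.normSq ((Vᴴ *ᵥ y) i) = ∑ i, Complex.normSq (y i) := by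
  have h1 : star (Vᴴ *ᵥ y) ⬝ᵥ (Vᴴ *ᵥ y) = star y ⬝ᵥ y := by
    rw [Matrix.star_mulVec, Matrix.conjTranspose_conjTranspose,
      Matrix.dotProduct_mulVec (star y ᵥ* V), Matrix.vecMul_vecMul, hV,
      Matrix.vecMul_one]
  have := h1
  rw [dot_star_self, dot_star_self] at this
  exact_mod_cast this



lemma key_comparison {U V G : Mn} {d e : Fin n → ℝ}
    (hU : Uᴴ * U = 1)
    (hV2 : V * Vᴴ = 1)
    (hd : Antitone d) (he : Antitone e) (he0 : ∀ i, 0 ≤ e i)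
    (hG : (1 - Gᴴ * G).PosSemidef)
    (hEq : U * rdiag d * Uᴴ = Gᴴ * (V * rdiag e * Vᴴ) * G)
    (j : Fin n) : d j ≤ e j := by
  classical
  set M : Mn := Vᴴ * (G * U) with hM
  set Sa : Finset (Fin n) := Finset.Iic j with hSa
  set Sb : Finset (Fin n) := Finset.Iio j with hSb
  set L : (↥Sa → ℂ) →ₗ[ℂ] (↥Sb → ℂ) :=
    Matrix.mulVecLin (Matrix.of fun (b : ↥Sb) (a : ↥Sa) => M b.1 a.1) with hL
  have hninj : ¬ Function.Injective L := by
    intro hinj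
    have hle := LinearMap.finrank_le_finrank_of_injective hinj
    rw [Module.finrank_pi, Module.finrank_pi, Fintype.card_coe, Fintype.card_coe,
      hSa, hSb, Fin.card_Iic, Fin.card_Iio] at hle
    omega
  obtain ⟨p, q, hpq, hne⟩ := Function.not_injective_iff.mp hninj
  set c : ↥Sa → ℂ := p - q with hc
  have hc0 : c ≠ 0 := sub_ne_zero.mpr hne
  have hLc : L c = 0 := by rw [hc, map_sub, hpq, sub_self]
  set c0 : Fin n → ℂ := fun i => if h : i ∈ Sa then c ⟨i, h⟩ else 0 with hc0def
  set x : Fin n → ℂ := U *ᵥ c0 with hx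
  set y : Fin n → ℂ := G *ᵥ x with hy
  set z : Fin n → ℂ := Vᴴ *ᵥ y with hz
  have hUx : Uᴴ *ᵥ x = c0 := by
    rw [hx, Matrix.mulVec_mulVec, hU, Matrix.one_mulVec]
  -- z vanishes below j
  have hz0 : ∀ b : Fin n, b ∈ Sb → z b = 0 := by
    intro b hb
    have hzM : z = M *ᵥ c0 := by
      rw [hz, hy, hx, Matrix.mulVec_mulVec, Matrix.mulVec_mulVec, hM, Matrix.mul_assoc]
    have h1 : z b = ∑ i, M b i * c0 i := by
      rw [hzM]; rfl
    have h2 : ∑ i, M b i * c0 i = ∑ i ∈ Sa, M b i * c0 i := by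
      refine (Finset.sum_subset (Finset.subset_univ Sa) ?_).symm
      intro i _ hi
      simp [hc0def, dif_neg hi]
    have h3 : ∑ i ∈ Sa, M b i * c0 i = L c ⟨b, hb⟩ := by
      rw [hL]
      simp only [Matrix.mulVecLin_apply, Matrix.mulVec, dotProduct, Matrix.of_apply,
        Finset.univ_eq_attach]
      rw [← Finset.sum_attach Sa (fun i => M b i * c0 i)]
      refine Finset.sum_congr rfl fun a _ => ?_
      simp [hc0def, dif_pos a.2]
    rw [h1, h2, h3, hLc]
    rfl
  -- quadratic form equality
  have hqf : ∑ i, d i * Complex.normSq (c0 i) = ∑ i, e i * Complex.normSq (z i) := by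
    have h1 : star x ⬝ᵥ ((U * rdiag d * Uᴴ) *ᵥ x)
        = star x ⬝ᵥ ((Gᴴ * (V * rdiag e * Vᴴ) * G) *ᵥ x) := by rw [hEq]
    rw [decomp_qf, hUx] at h1
    have h2 : (Gᴴ * (V * rdiag e * Vᴴ) * G) *ᵥ x
        = Gᴴ *ᵥ ((V * rdiag e * Vᴴ) *ᵥ y) := by
      simp only [hy, hx, Matrix.mulVec_mulVec, Matrix.mul_assoc]
    rw [h2, star_dot_mulVec_conjT, ← hy, decomp_qf, ← hz] at h1
    exact_mod_cast h1
  -- norm facts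
  have hnz : (0:ℝ) ≤ ∑ i, Complex.normSq (c0 i) := Finset.sum_nonneg fun i _ => Complex.normSq_nonneg _
  have hnormzy : ∑ i, Complex.normSq (z i) = ∑ i, Complex.normSq (y i) := by
    rw [hz]; exact norm_mulVec_unitary V hV2 y
  have hnormxc : ∑ i, Complex.normSq ((Uᴴ *ᵥ x) i) = ∑ i, Complex.normSq (x i) :=
    norm_mulVec_unitary U (mul_eq_one_comm.mp hU) x
  have hnormyx : ∑ i, Complex.normSq (y i) ≤ ∑ i, Complex.normSq (x i) := by
    have hpsd := hG.dotProduct_mulVec_nonneg x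
    rw [Matrix.sub_mulVec, Matrix.one_mulVec, dotProduct_sub] at hpsd
    have h2 : (Gᴴ * G) *ᵥ x = Gᴴ *ᵥ (G *ᵥ x) := by
      simp only [Matrix.mulVec_mulVec]
    rw [h2, star_dot_mulVec_conjT, ← hy, dot_star_self, dot_star_self] at hpsd
    rw [← Complex.ofReal_sub] at hpsd
    have := Complex.zero_le_real.mp hpsd
    linarith
  have hxc : ∑ i, Complex.normSq (x i) = ∑ i, Complex.normSq (c0 i) := by
    rw [← hnormxc, hUx]
  -- positivity of the norm of c0
  have hS0pos : 0 < ∑ i, Complex.normSq (c0 i) := by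
    obtain ⟨a, ha⟩ := Function.ne_iff.mp hc0
    refine Finset.sum_pos' (fun i _ => Complex.normSq_nonneg _) ⟨a.1, Finset.mem_univ _, ?_⟩
    have : c0 a.1 = c a := by
      simp only [hc0def, dif_pos a.2]
    rw [this]
    exact Complex.normSq_pos.mpr ha
  -- lower bound
  have hlow : d j * ∑ i, Complex.normSq (c0 i) ≤ ∑ i, d i * Complex.normSq (c0 i) := by
    rw [Finset.mul_sum]
    refine Finset.sum_le_sum fun i _ => ?_
    by_cases hi : i ∈ Sa
    · exact mul_le_mul_of_nonneg_right (hd (Finset.mem_Iic.mp hi)) (Complex.normSq_nonneg _)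
    · simp [hc0def, dif_neg hi]
  -- upper bound
  have hup : ∑ i, e i * Complex.normSq (z i) ≤ e j * ∑ i, Complex.normSq (z i) := by
    rw [Finset.mul_sum]
    refine Finset.sum_le_sum fun i _ => ?_
    by_cases hi : i ∈ Sb
    · rw [hz0 i hi]; simp
    · have hji : j ≤ i := le_of_not_gt (fun h => hi (Finset.mem_Iio.mpr h))
      exact mul_le_mul_of_nonneg_right (he hji) (Complex.normSq_nonneg _)
  have : d j * ∑ i, Complex.normSq (c0 i) ≤ e j * ∑ i, Complex.normSq (c0 i) := by
    calc d j * ∑ i, Complex.normSq (c0 i) ≤ ∑ i, d i * Complex.normSq (c0 i) := hlow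
    _ = ∑ i, e i * Complex.normSq (z i) := hqf
    _ ≤ e j * ∑ i, Complex.normSq (z i) := hup
    _ = e j * ∑ i, Complex.normSq (y i) := by rw [hnormzy]
    _ ≤ e j * ∑ i, Complex.normSq (x i) := mul_le_mul_of_nonneg_left hnormyx (he0 j)
    _ = e j * ∑ i, Complex.normSq (c0 i) := by rw [hxc]
  rw [mul_comm (d j), mul_comm (e j)] at this
  exact le_of_mul_le_mul_left this hS0pos

lemma rdiag_conjT (d : Fin n → ℝ) : (rdiag d)ᴴ = rdiag d := by
  ext i j
  simp only [Matrix.conjTranspose_apply, rdiag, Matrix.diagonal_apply]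
  by_cases h : i = j
  · subst h
    simp [Complex.conj_ofReal]
  · rw [if_neg (Ne.symm h), if_neg h]
    simp

lemma herm_decomp (U : Mn) (d : Fin n → ℝ) : (U * rdiag d * Uᴴ).IsHermitian := by
  unfold Matrix.IsHermitian
  rw [Matrix.conjTranspose_mul, Matrix.conjTranspose_mul, Matrix.conjTranspose_conjTranspose,
    rdiag_conjT, Matrix.mul_assoc]

lemma psd_decomp {U : Mn} {d : Fin n → ℝ} (hd0 : ∀ i, 0 ≤ d i) :
    (U * rdiag d * Uᴴ).PosSemidef := by
  refine .of_dotProduct_mulVec_nonneg (herm_decomp U d) fun x => ?_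
  rw [decomp_qf]
  refine Complex.zero_le_real.mpr (Finset.sum_nonneg fun i _ => ?_)
  exact mul_nonneg (hd0 i) (Complex.normSq_nonneg _)

lemma rdiag_mul (d e : Fin n → ℝ) : rdiag d * rdiag e = rdiag (d * e) := by
  rw [rdiag, rdiag, rdiag, Matrix.diagonal_mul_diagonal]
  have : (fun i => ((d i : ℂ) * (e i : ℂ))) = fun i => (((d * e) i : ℝ) : ℂ) := by
    funext i
    rw [Pi.mul_apply, Complex.ofReal_mul]
  rw [this]

lemma rdiag_add (d e : Fin n → ℝ) : rdiag d + rdiag e = rdiag (d + e) := by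
  rw [rdiag, rdiag, rdiag, Matrix.diagonal_add]
  have : (fun i => ((d i : ℂ) + (e i : ℂ))) = fun i => (((d + e) i : ℝ) : ℂ) := by
    funext i
    rw [Pi.add_apply, Complex.ofReal_add]
  rw [this]

lemma rdiag_one : rdiag (fun _ : Fin n => (1:ℝ)) = 1 := by
  rw [rdiag]
  simp

lemma decomp_one {U : Mn} (hU2 : U * Uᴴ = 1) : U * rdiag (fun _ => (1:ℝ)) * Uᴴ = 1 := by
  rw [rdiag_one, Matrix.mul_one, hU2]

lemma decomp_mul {U : Mn} (hU1 : Uᴴ * U = 1) (d e : Fin n → ℝ) :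
    (U * rdiag d * Uᴴ) * (U * rdiag e * Uᴴ) = U * rdiag (d * e) * Uᴴ := by
  have : (U * rdiag d * Uᴴ) * (U * rdiag e * Uᴴ)
      = U * rdiag d * (Uᴴ * U) * rdiag e * Uᴴ := by
    simp only [Matrix.mul_assoc]
  rw [this, hU1, Matrix.mul_one, Matrix.mul_assoc U (rdiag d) (rdiag e), rdiag_mul]

lemma decomp_add {U : Mn} (d e : Fin n → ℝ) :
    (U * rdiag d * Uᴴ) + (U * rdiag e * Uᴴ) = U * rdiag (d + e) * Uᴴ := by
  rw [← rdiag_add, Matrix.mul_add, Matrix.add_mul]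

lemma decomp_inv {U : Mn} (hU1 : Uᴴ * U = 1) (hU2 : U * Uᴴ = 1) {d : Fin n → ℝ}
    (hd : ∀ i, d i ≠ 0) : (U * rdiag d * Uᴴ)⁻¹ = U * rdiag d⁻¹ * Uᴴ := by
  refine Matrix.inv_eq_right_inv ?_
  rw [decomp_mul hU1]
  have : d * d⁻¹ = fun _ => (1:ℝ) := by
    funext i
    exact mul_inv_cancel₀ (hd i)
  rw [this, decomp_one hU2]

lemma eigValsDown_eq {A : Mn} (hA : A.IsHermitian) :
    eigValsDown A = hA.eigenvalues ∘ ⇑(Fin.revPerm.trans (Tuple.sort hA.eigenvalues)) := by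
  funext k
  rw [eigValsDown, dif_pos hA]
  rfl

lemma eigValsDown_antitone {A : Mn} (hA : A.IsHermitian) : Antitone (eigValsDown A) := by
  intro i j hij
  rw [eigValsDown_eq hA]
  exact Tuple.monotone_sort hA.eigenvalues (Fin.rev_le_rev.mpr hij)

lemma eigValsDown_nonneg {A : Mn} (hA : A.PosSemidef) (i : Fin n) : 0 ≤ eigValsDown A i := by
  rw [eigValsDown_eq hA.1]
  exact hA.eigenvalues_nonneg _

lemma exists_sorted_decomp_matFun {A : Mn} (hA : A.IsHermitian) :
    ∃ U : Mn, Uᴴ * U = 1 ∧ U * Uᴴ = 1 ∧ A = U * rdiag (eigValsDown A) * Uᴴ ∧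
      ∀ h : ℝ → ℝ, matFun h A = U * rdiag (h ∘ eigValsDown A) * Uᴴ := by
  set τ : Equiv.Perm (Fin n) := Fin.revPerm.trans (Tuple.sort hA.eigenvalues) with hτ
  set U0 : Mn := (hA.eigenvectorUnitary : Mn) with hU0
  have hU01 : U0ᴴ * U0 = 1 := by
    simpa [Matrix.star_eq_conjTranspose] using
      Matrix.mem_unitaryGroup_iff'.mp hA.eigenvectorUnitary.2
  have hU02 : U0 * U0ᴴ = 1 := by
    simpa [Matrix.star_eq_conjTranspose] using
      Matrix.mem_unitaryGroup_iff.mp hA.eigenvectorUnitary.2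
  refine ⟨U0.submatrix id ⇑τ, perm_unitary_left U0 τ hU01, perm_unitary_right U0 τ hU02, ?_, ?_⟩
  · rw [eigValsDown_eq hA, perm_decomp U0 hA.eigenvalues τ]
    exact hA.spectral_theorem
  · intro h
    have h1 : matFun h A = U0 * rdiag (h ∘ hA.eigenvalues) * U0ᴴ := by
      rw [matFun, dif_pos hA]
      rfl
    have h2 : h ∘ eigValsDown A = (h ∘ hA.eigenvalues) ∘ ⇑τ := by
      rw [eigValsDown_eq hA]
      rfl
    rw [h2, perm_decomp U0 (h ∘ hA.eigenvalues) τ]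
    exact h1

lemma sorted_decomp_unique {U V : Mn} {d e : Fin n → ℝ}
    (hU1 : Uᴴ * U = 1) (hU2 : U * Uᴴ = 1) (hV1 : Vᴴ * V = 1) (hV2 : V * Vᴴ = 1)
    (hd : Antitone d) (he : Antitone e) (hd0 : ∀ i, 0 ≤ d i) (he0 : ∀ i, 0 ≤ e i)
    (hUV : U * rdiag d * Uᴴ = V * rdiag e * Vᴴ) : d = e := by
  have hG : ((1 : Mn) - (1:Mn)ᴴ * 1).PosSemidef := by
    rw [Matrix.conjTranspose_one, Matrix.mul_one, sub_self]
    exact Matrix.PosSemidef.zero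
  funext j
  refine le_antisymm (key_comparison hU1 hV2 hd he he0 hG ?_ j)
    (key_comparison hV1 hU2 he hd hd0 hG ?_ j)
  · rw [Matrix.conjTranspose_one, Matrix.one_mul, Matrix.mul_one]
    exact hUV
  · rw [Matrix.conjTranspose_one, Matrix.one_mul, Matrix.mul_one]
    exact hUV.symm

lemma rearrange (k : ℕ) {lam d : Fin n → ℝ} (hl : Antitone lam)
    (hd0 : ∀ i, 0 ≤ d i) (hd1 : ∀ i, d i ≤ 1)
    (hsum : ∑ i, d i = ((Finset.univ.filter (fun j : Fin n => (j:ℕ) < k)).card : ℝ)) :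
    ∑ i, lam i * d i ≤ ∑ i ∈ Finset.univ.filter (fun j : Fin n => (j:ℕ) < k), lam i := by
  set S := Finset.univ.filter (fun j : Fin n => (j:ℕ) < k) with hS
  rcases lt_or_ge k n with hk | hk
  · set p := lam ⟨k, hk⟩ with hp
    have step : ∀ i : Fin n, lam i * d i ≤ (if i ∈ S then lam i - p else 0) + p * d i := by
      intro i
      by_cases hi : i ∈ S
      · have hik : (i:ℕ) < k := by
          simpa [hS] using hi
        have h1 : p ≤ lam i := hl (by simp [Fin.le_def]; omega)
        have h2 := hd1 i
        have h3 := hd0 i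
        rw [if_pos hi]
        nlinarith
      · have hik : k ≤ (i:ℕ) := by
          by_contra hcon
          exact hi (by simp [hS]; omega)
        have h1 : lam i ≤ p := hl (by simp [Fin.le_def]; omega)
        rw [if_neg hi, zero_add]
        exact mul_le_mul_of_nonneg_right h1 (hd0 i)
    calc ∑ i, lam i * d i
        ≤ ∑ i, ((if i ∈ S then lam i - p else 0) + p * d i) :=
          Finset.sum_le_sum fun i _ => step i
      _ = (∑ i ∈ S, (lam i - p)) + p * ∑ i, d i := by
          rw [Finset.sum_add_distrib, ← Finset.mul_sum, Finset.sum_ite_mem, Finset.univ_inter]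
      _ = ∑ i ∈ S, lam i := by
          rw [hsum, Finset.sum_sub_distrib, Finset.sum_const, nsmul_eq_mul]
          ring
  · have hSuniv : S = Finset.univ := by
      rw [hS]
      refine Finset.filter_true_of_mem fun i _ => lt_of_lt_of_le i.isLt hk
    rw [hSuniv]
    rw [hSuniv, Finset.card_univ, Fintype.card_fin] at hsum
    have hzero : ∑ i : Fin n, (1 - d i) = 0 := by
      rw [Finset.sum_sub_distrib, hsum, Finset.sum_const, Finset.card_univ, Fintype.card_fin,
        nsmul_eq_mul, mul_one, sub_self]
    have hone : ∀ i : Fin n, d i = 1 := by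
      intro i
      have := (Finset.sum_eq_zero_iff_of_nonneg
        (fun i _ => by linarith [hd1 i] : ∀ i ∈ Finset.univ, (0:ℝ) ≤ 1 - d i)).mp hzero i
        (Finset.mem_univ i)
      linarith
    refine le_of_eq (Finset.sum_congr rfl fun i _ => ?_)
    rw [hone i, mul_one]

lemma kyfan {H V : Mn} (hH : H.IsHermitian) (hV1 : Vᴴ * V = 1) (hV2 : V * Vᴴ = 1) (k : ℕ) :
    ∑ j ∈ Finset.univ.filter (fun j : Fin n => (j:ℕ) < k), ((Vᴴ * H * V) j j).re
      ≤ ∑ j ∈ Finset.univ.filter (fun j : Fin n => (j:ℕ) < k), eigValsDown H j := by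
  obtain ⟨U, hU1, hU2, hDec, -⟩ := exists_sorted_decomp_matFun hH
  set lam := eigValsDown H with hlam
  set S := Finset.univ.filter (fun j : Fin n => (j:ℕ) < k) with hS
  set Q : Mn := Uᴴ * V with hQdef
  have hQ1 : Qᴴ * Q = 1 := by
    rw [hQdef, Matrix.conjTranspose_mul, Matrix.conjTranspose_conjTranspose]
    calc Vᴴ * U * (Uᴴ * V) = Vᴴ * (U * Uᴴ) * V := by simp only [Matrix.mul_assoc]
      _ = 1 := by rw [hU2, Matrix.mul_one, hV1]
  have hQ2 : Q * Qᴴ = 1 := by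
    rw [hQdef, Matrix.conjTranspose_mul, Matrix.conjTranspose_conjTranspose]
    calc Uᴴ * V * (Vᴴ * U) = Uᴴ * (V * Vᴴ) * U := by simp only [Matrix.mul_assoc]
      _ = 1 := by rw [hV2, Matrix.mul_one, hU1]
  have hVHV : Vᴴ * H * V = Qᴴ * rdiag lam * (Qᴴ)ᴴ := by
    rw [hDec, hQdef]
    simp only [Matrix.conjTranspose_mul, Matrix.conjTranspose_conjTranspose, Matrix.mul_assoc]
  have entry : ∀ jj : Fin n, ((Vᴴ * H * V) jj jj).re
      = ∑ i, lam i * Complex.normSq (Q i jj) := by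
    intro jj
    rw [hVHV, triple_apply]
    have hterm : ∀ i : Fin n, Qᴴ jj i * (lam i : ℂ) * (starRingEnd ℂ) (Qᴴ jj i)
        = ((lam i * Complex.normSq (Q i jj) : ℝ) : ℂ) := by
      intro i
      simp only [Matrix.conjTranspose_apply, Complex.ofReal_mul,
        Complex.normSq_eq_conj_mul_self, RCLike.star_def, Complex.conj_conj]
      ring
    rw [Finset.sum_congr rfl fun i _ => hterm i, ← Complex.ofReal_sum, Complex.ofReal_re]
  set gam : Fin n → Fin n → ℝ := fun i j => Complex.normSq (Q i j) with hgam
  have rowsum : ∀ i, ∑ j, gam i j = 1 := by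
    intro i
    have h := congrFun (congrFun hQ2 i) i
    rw [Matrix.mul_apply, Matrix.one_apply_eq] at h
    have h2 : ∀ j : Fin n, Q i j * Qᴴ j i = ((gam i j : ℝ) : ℂ) := by
      intro j
      rw [Matrix.conjTranspose_apply, hgam]
      exact Complex.mul_conj (Q i j)
    rw [Finset.sum_congr rfl fun j _ => h2 j, ← Complex.ofReal_sum] at h
    exact_mod_cast h
  have colsum : ∀ j, ∑ i, gam i j = 1 := by
    intro j
    have h := congrFun (congrFun hQ1 j) j
    rw [Matrix.mul_apply, Matrix.one_apply_eq] at h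
    have h2 : ∀ i : Fin n, Qᴴ j i * Q i j = ((gam i j : ℝ) : ℂ) := by
      intro i
      rw [Matrix.conjTranspose_apply, hgam]
      exact (Complex.normSq_eq_conj_mul_self (z := Q i j)).symm
    rw [Finset.sum_congr rfl fun i _ => h2 i, ← Complex.ofReal_sum] at h
    exact_mod_cast h
  set dco : Fin n → ℝ := fun i => ∑ j ∈ S, gam i j with hdco
  have hd0 : ∀ i, 0 ≤ dco i :=
    fun i => Finset.sum_nonneg fun j _ => Complex.normSq_nonneg _
  have hd1 : ∀ i, dco i ≤ 1 := by
    intro i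
    rw [← rowsum i]
    exact Finset.sum_le_sum_of_subset_of_nonneg (Finset.subset_univ S)
      (fun j _ _ => Complex.normSq_nonneg _)
  have hsumd : ∑ i, dco i = (S.card : ℝ) := by
    rw [hdco, Finset.sum_comm]
    rw [Finset.sum_congr rfl fun j _ => colsum j, Finset.sum_const, nsmul_eq_mul, mul_one]
  calc ∑ j ∈ S, ((Vᴴ * H * V) j j).re
      = ∑ j ∈ S, ∑ i, lam i * gam i j := Finset.sum_congr rfl fun j _ => entry j
    _ = ∑ i, lam i * dco i := by
        rw [Finset.sum_comm]
        exact Finset.sum_congr rfl fun i _ => (Finset.mul_sum _ _ _).symm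
    _ ≤ ∑ i ∈ S, lam i := by
        rw [hS]
        exact rearrange k (eigValsDown_antitone hH) hd0 hd1 (by rw [← hS]; exact hsumd)

lemma rdiag_sub (d e : Fin n → ℝ) : rdiag d - rdiag e = rdiag (d - e) := by
  rw [rdiag, rdiag, rdiag, Matrix.diagonal_sub]
  have : (fun i => ((d i : ℂ) - (e i : ℂ))) = fun i => (((d - e) i : ℝ) : ℂ) := by
    funext i
    rw [Pi.sub_apply, Complex.ofReal_sub]
  rw [this]

lemma decomp_sub {U : Mn} (d e : Fin n → ℝ) :
    (U * rdiag d * Uᴴ) - (U * rdiag e * Uᴴ) = U * rdiag (d - e) * Uᴴ := by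
  rw [← rdiag_sub, Matrix.mul_sub, Matrix.sub_mul]

lemma rdiag_smul (r : ℝ) (d : Fin n → ℝ) :
    rdiag (fun i => r * d i) = (r : ℂ) • rdiag d := by
  ext i j
  rw [rdiag, rdiag, Matrix.smul_apply]
  by_cases h : i = j
  · subst h
    rw [Matrix.diagonal_apply_eq, Matrix.diagonal_apply_eq, Complex.ofReal_mul, smul_eq_mul]
  · rw [Matrix.diagonal_apply_ne _ h, Matrix.diagonal_apply_ne _ h, smul_zero]

lemma unitary_sandwich {V M : Mn} (hV1 : Vᴴ * V = 1) :
    Vᴴ * (V * M * Vᴴ) * V = M := by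
  calc Vᴴ * (V * M * Vᴴ) * V = (Vᴴ * V) * M * (Vᴴ * V) := by simp only [Matrix.mul_assoc]
    _ = M := by rw [hV1, Matrix.one_mul, Matrix.mul_one]

/-- scalar identity for g -/
lemma gfun_eq (a x : ℝ) (hx : 0 ≤ x) :
    a * x + x ^ 2 / (x + 1) = (a + 1) * x - 1 + (1 + x)⁻¹ := by
  have h : x + 1 ≠ 0 := by linarith
  field_simp
  ring

lemma gfun_eq' (a x : ℝ) (hx : 0 ≤ x) :
    a * x + x ^ 2 / (x + 1) = (a + 1) * x - (1 - (1 + x)⁻¹) := by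
  rw [gfun_eq a x hx]
  ring

lemma gfun_nonneg (a x : ℝ) (ha : 0 ≤ a) (hx : 0 ≤ x) : 0 ≤ a * x + x ^ 2 / (x + 1) := by
  have h1 : 0 ≤ a * x := mul_nonneg ha hx
  have h2 : 0 ≤ x ^ 2 / (x + 1) := div_nonneg (sq_nonneg x) (by linarith)
  linarith

lemma Tfun_mono {x y : ℝ} (hx : 0 ≤ x) (hxy : x ≤ y) :
    1 - (1 + x)⁻¹ ≤ 1 - (1 + y)⁻¹ := by
  have hx1 : (0:ℝ) < 1 + x := by linarith
  have hy1 : (0:ℝ) < 1 + y := by linarith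
  have := one_div_le_one_div_of_le hx1 (by linarith : 1 + x ≤ 1 + y)
  simp only [one_div] at this
  linarith

lemma Tfun_nonneg {x : ℝ} (hx : 0 ≤ x) : 0 ≤ 1 - (1 + x)⁻¹ := by
  have hx1 : (0:ℝ) < 1 + x := by linarith
  have : (1 + x)⁻¹ ≤ 1 := by
    rw [inv_le_one_iff₀]
    right
    linarith
  linarith

lemma gfun_mono (a : ℝ) (ha : 0 ≤ a) {x y : ℝ} (hx : 0 ≤ x) (hxy : x ≤ y) :
    a * x + x ^ 2 / (x + 1) ≤ a * y + y ^ 2 / (y + 1) := by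
  rw [gfun_eq a x hx, gfun_eq a y (le_trans hx hxy)]
  have hx1 : (0:ℝ) < 1 + x := by linarith
  have hy1 : (0:ℝ) < 1 + y := by linarith
  have hu0 : 0 < (1 + x)⁻¹ := inv_pos.mpr hx1
  have hv0 : 0 < (1 + y)⁻¹ := inv_pos.mpr hy1
  have key : (1 + x)⁻¹ - (1 + y)⁻¹ ≤ y - x := by
    have h2 : (1 + x)⁻¹ - (1 + y)⁻¹ = (y - x) * ((1 + x)⁻¹ * (1 + y)⁻¹) := by
      field_simp
      ring
    rw [h2]
    have hu1 : (1 + x)⁻¹ ≤ 1 := by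
      rw [inv_le_one_iff₀]
      right
      linarith
    have hv1 : (1 + y)⁻¹ ≤ 1 := by
      rw [inv_le_one_iff₀]
      right
      linarith
    have huv : (1 + x)⁻¹ * (1 + y)⁻¹ ≤ 1 := by nlinarith
    calc (y - x) * ((1 + x)⁻¹ * (1 + y)⁻¹) ≤ (y - x) * 1 :=
        mul_le_mul_of_nonneg_left huv (sub_nonneg.mpr hxy)
      _ = y - x := mul_one _
  nlinarith

/-- matFun of g on a PSD matrix, as explicit algebra -/
lemma matFun_g {M : Mn} (hM : M.PosSemidef) (a : ℝ) :
    matFun (fun x => a * x + x ^ 2 / (x + 1)) M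
      = ((a + 1 : ℝ) : ℂ) • M - 1 + (1 + M)⁻¹ := by
  obtain ⟨U, hU1, hU2, hMd, hmf⟩ := exists_sorted_decomp_matFun hM.1
  set lam := eigValsDown M with hlam
  have hlam0 : ∀ i, 0 ≤ lam i := eigValsDown_nonneg hM
  rw [hmf]
  have hsplit : (fun x => a * x + x ^ 2 / (x + 1)) ∘ lam
      = ((fun i => (a+1) * lam i) - (fun _ => (1:ℝ))) + fun i => (fun j => 1 + lam j)⁻¹ i := by
    funext i
    simp only [Function.comp_apply, Pi.add_apply, Pi.sub_apply, Pi.inv_apply]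
    rw [gfun_eq a (lam i) (hlam0 i)]
  rw [hsplit, ← rdiag_add, ← rdiag_sub, Matrix.mul_add, Matrix.add_mul, Matrix.mul_sub,
    Matrix.sub_mul]
  have h1 : U * rdiag (fun i => (a+1) * lam i) * Uᴴ = ((a + 1 : ℝ) : ℂ) • M := by
    rw [rdiag_smul, hMd]
    rw [Matrix.mul_smul, Matrix.smul_mul]
  have h2 : U * rdiag (fun _ => (1:ℝ)) * Uᴴ = 1 := decomp_one hU2
  have h3 : U * rdiag (fun j => 1 + lam j)⁻¹ * Uᴴ = (1 + M)⁻¹ := by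
    have h4 : (1 : Mn) + M = U * rdiag (fun j => 1 + lam j) * Uᴴ := by
      rw [hMd, ← decomp_one hU2, decomp_add]
      rfl
    rw [h4, decomp_inv hU1 hU2 (fun i => by have := hlam0 i; positivity)]
  rw [h1, h2, h3]

lemma herm_conj {B P : Mn} (hB : Bᴴ = B) (hP : Pᴴ = P) : (P * B * P).IsHermitian := by
  show (P * B * P)ᴴ = P * B * P
  rw [Matrix.conjTranspose_mul (P * B) P, Matrix.conjTranspose_mul P B, hB, hP]
  simp only [Matrix.mul_assoc]

lemma W_chain {X Y : Mn} (hX : X.PosSemidef) (hY : Y.PosSemidef) :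
    ((1 + X)⁻¹ - (1 + X + Y)⁻¹).IsHermitian ∧
      ∀ j, eigValsDown ((1 + X)⁻¹ - (1 + X + Y)⁻¹) j ≤ 1 - (1 + eigValsDown Y j)⁻¹ := by
  obtain ⟨UX, hUX1, hUX2, hXdec, -⟩ := exists_sorted_decomp_matFun hX.1
  set xi := eigValsDown X with hxi
  have hxi0 : ∀ i, 0 ≤ xi i := eigValsDown_nonneg hX
  have h1xi : ∀ i, (0:ℝ) < 1 + xi i := fun i => by have := hxi0 i; linarith
  set sv : Fin n → ℝ := fun i => Real.sqrt (1 + xi i) with hsv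
  have hsvpos : ∀ i, 0 < sv i := fun i => Real.sqrt_pos.mpr (h1xi i)
  have hsvsq : ∀ i, sv i * sv i = 1 + xi i := fun i => Real.mul_self_sqrt (le_of_lt (h1xi i))
  set C : Mn := UX * rdiag (fun i => (sv i)⁻¹) * UXᴴ with hC
  set SA : Mn := UX * rdiag sv * UXᴴ with hSAdef
  have hCS : C * SA = 1 := by
    rw [hC, hSAdef, decomp_mul hUX1]
    have h : (fun i => (sv i)⁻¹) * sv = fun _ => (1:ℝ) := by
      funext i
      exact inv_mul_cancel₀ (ne_of_gt (hsvpos i))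
    rw [h, decomp_one hUX2]
  have hSC : SA * C = 1 := by
    rw [hC, hSAdef, decomp_mul hUX1]
    have h : sv * (fun i => (sv i)⁻¹) = fun _ => (1:ℝ) := by
      funext i
      exact mul_inv_cancel₀ (ne_of_gt (hsvpos i))
    rw [h, decomp_one hUX2]
  have hCherm : Cᴴ = C := herm_decomp _ _
  have hA : (1:Mn) + X = UX * rdiag (fun i => 1 + xi i) * UXᴴ := by
    calc (1:Mn) + X = UX * rdiag (fun _ => 1) * UXᴴ + UX * rdiag xi * UXᴴ := by
          rw [decomp_one hUX2, ← hXdec]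
      _ = UX * rdiag ((fun _ => (1:ℝ)) + xi) * UXᴴ := decomp_add _ _
      _ = UX * rdiag (fun i => 1 + xi i) * UXᴴ := rfl
  have hCC : C * C = UX * rdiag (fun i => (1 + xi i)⁻¹) * UXᴴ := by
    rw [hC, decomp_mul hUX1]
    have h : (fun i => (sv i)⁻¹) * (fun i => (sv i)⁻¹) = fun i => (1 + xi i)⁻¹ := by
      funext i
      rw [Pi.mul_apply, ← mul_inv, hsvsq i]
    rw [h]
  have hAinv : (1 + X)⁻¹ = C * C := by
    rw [hA, decomp_inv hUX1 hUX2 (fun i => ne_of_gt (h1xi i)), hCC]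
    rfl
  have hGpsd : ((1:Mn) - Cᴴ * C).PosSemidef := by
    rw [hCherm, hCC, ← decomp_one hUX2, decomp_sub]
    refine psd_decomp fun i => ?_
    simp only [Pi.sub_apply]
    have h2 : (1 + xi i)⁻¹ ≤ 1 := by
      rw [inv_le_one_iff₀]
      right
      linarith [hxi0 i]
    linarith
  set Ytil : Mn := C * Y * C with hYtil
  have hYtilpsd : Ytil.PosSemidef := by
    have h := hY.conjTranspose_mul_mul_same C
    rwa [hCherm] at h
  obtain ⟨V2, hV21, hV22, hYtdec, -⟩ := exists_sorted_decomp_matFun hYtilpsd.1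
  set nu := eigValsDown Ytil with hnu
  have hnu0 : ∀ i, 0 ≤ nu i := eigValsDown_nonneg hYtilpsd
  have hBt : (1:Mn) + Ytil = V2 * rdiag (fun i => 1 + nu i) * V2ᴴ := by
    calc (1:Mn) + Ytil = V2 * rdiag (fun _ => 1) * V2ᴴ + V2 * rdiag nu * V2ᴴ := by
          rw [decomp_one hV22, ← hYtdec]
      _ = V2 * rdiag ((fun _ => (1:ℝ)) + nu) * V2ᴴ := decomp_add _ _
      _ = _ := rfl
  have h1nu : ∀ i, (0:ℝ) < 1 + nu i := fun i => by have := hnu0 i; linarith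
  have hBtinv : (1 + Ytil)⁻¹ = V2 * rdiag (fun i => (1 + nu i)⁻¹) * V2ᴴ := by
    rw [hBt, decomp_inv hV21 hV22 (fun i => ne_of_gt (h1nu i))]
    rfl
  have hBtinv1 : (1 + Ytil) * (1 + Ytil)⁻¹ = 1 := by
    rw [hBtinv, hBt, decomp_mul hV21]
    have h : (fun i => 1 + nu i) * (fun i => (1 + nu i)⁻¹) = fun _ => (1:ℝ) := by
      funext i
      exact mul_inv_cancel₀ (ne_of_gt (h1nu i))
    rw [h, decomp_one hV22]
  set tnu : Fin n → ℝ := fun i => 1 - (1 + nu i)⁻¹ with htnu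
  have htnu_anti : Antitone tnu := by
    intro i j hij
    exact Tfun_mono (hnu0 j) (eigValsDown_antitone hYtilpsd.1 hij)
  have htnu0 : ∀ i, 0 ≤ tnu i := fun i => Tfun_nonneg (hnu0 i)
  have hTtil : (1:Mn) - (1 + Ytil)⁻¹ = V2 * rdiag tnu * V2ᴴ := by
    rw [hBtinv, ← decomp_one hV22, decomp_sub]
    rfl
  have hXYinv : (1 + X + Y)⁻¹ = C * (1 + Ytil)⁻¹ * C := by
    refine Matrix.inv_eq_right_inv ?_
    have hsum : (1:Mn) + X + Y = SA * (1 + Ytil) * SA := by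
      have h1 : SA * SA = 1 + X := by
        rw [hSAdef, decomp_mul hUX1]
        have h : sv * sv = fun i => 1 + xi i := funext hsvsq
        rw [h, ← hA]
      have h2 : SA * Ytil * SA = Y := by
        calc SA * Ytil * SA = SA * (C * Y * C) * SA := by rw [hYtil]
          _ = SA * C * Y * (C * SA) := by simp only [Matrix.mul_assoc]
          _ = Y := by simp [hSC, hCS]
      rw [Matrix.mul_add, Matrix.add_mul, Matrix.mul_one, h1, h2]
    rw [hsum]
    calc SA * (1 + Ytil) * SA * (C * (1 + Ytil)⁻¹ * C)
        = SA * (1 + Ytil) * ((SA * C) * ((1 + Ytil)⁻¹ * C)) := by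
          simp only [Matrix.mul_assoc]
      _ = SA * ((1 + Ytil) * (1 + Ytil)⁻¹) * C := by
          rw [hSC, Matrix.one_mul]
          simp only [Matrix.mul_assoc]
      _ = SA * C := by rw [hBtinv1, Matrix.mul_one]
      _ = 1 := hSC
  have hW : (1 + X)⁻¹ - (1 + X + Y)⁻¹ = C * ((1:Mn) - (1 + Ytil)⁻¹) * C := by
    rw [hAinv, hXYinv, Matrix.mul_sub, Matrix.sub_mul, Matrix.mul_one]
  have hWherm : ((1 + X)⁻¹ - (1 + X + Y)⁻¹).IsHermitian := by
    rw [hW, hTtil]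
    exact herm_conj (herm_decomp V2 tnu) hCherm
  refine ⟨hWherm, fun j => ?_⟩
  obtain ⟨UW, hUW1, hUW2, hWdec, -⟩ := exists_sorted_decomp_matFun hWherm
  have app2 : eigValsDown ((1 + X)⁻¹ - (1 + X + Y)⁻¹) j ≤ tnu j := by
    refine key_comparison hUW1 hV22 (eigValsDown_antitone hWherm) htnu_anti htnu0 hGpsd ?_ j
    rw [hCherm, ← hTtil, ← hW, ← hWdec]
  obtain ⟨VY, hVY1, hVY2, hYdec, -⟩ := exists_sorted_decomp_matFun hY.1
  have app3 : nu j ≤ eigValsDown Y j := by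
    refine key_comparison hV21 hVY2 (eigValsDown_antitone hYtilpsd.1)
      (eigValsDown_antitone hY.1) (eigValsDown_nonneg hY) hGpsd ?_ j
    rw [hCherm, ← hYdec, ← hYtil, ← hYtdec]
  calc eigValsDown ((1 + X)⁻¹ - (1 + X + Y)⁻¹) j ≤ tnu j := app2
    _ ≤ 1 - (1 + eigValsDown Y j)⁻¹ := Tfun_mono (hnu0 j) app3

end Stmt9Aux

open Stmt9Aux in
/-- Proposition `prop:g`: for PSD `X, Y`, `a ≥ 0` and
`g_a(x) = a·x + x²/(x+1)`, the eigenvalues of `g_a(Y)` are weakly majorised by those of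
`g_a(X + Y) - g_a(X)`. -/
theorem stmt9 {n : ℕ} (X Y : Matrix (Fin n) (Fin n) ℂ)
    (hX : X.PosSemidef) (hY : Y.PosSemidef) (a : ℝ) (ha : 0 ≤ a) (k : ℕ) :
    ∑ j ∈ Finset.univ.filter (fun j : Fin n => (j : ℕ) < k),
        eigValsDown (matFun (fun x => a * x + x ^ 2 / (x + 1)) Y) j ≤
      ∑ j ∈ Finset.univ.filter (fun j : Fin n => (j : ℕ) < k),
        eigValsDown (matFun (fun x => a * x + x ^ 2 / (x + 1)) (X + Y) -
          matFun (fun x => a * x + x ^ 2 / (x + 1)) X) j := by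
  have hXY : (X + Y).PosSemidef := hX.add hY
  obtain ⟨hWherm, hWbound⟩ := W_chain hX hY
  obtain ⟨VY, hVY1, hVY2, hYdec, hYmf⟩ := exists_sorted_decomp_matFun hY.1
  set mu := eigValsDown Y with hmu
  have hmu0 : ∀ i, 0 ≤ mu i := eigValsDown_nonneg hY
  have hgmu_anti : Antitone ((fun x => a * x + x ^ 2 / (x + 1)) ∘ mu) := by
    intro i j hij
    exact gfun_mono a ha (hmu0 j) (eigValsDown_antitone hY.1 hij)
  have hgmu0 : ∀ i, 0 ≤ ((fun x => a * x + x ^ 2 / (x + 1)) ∘ mu) i :=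
    fun i => gfun_nonneg a (mu i) ha (hmu0 i)
  have hgYdec : matFun (fun x => a * x + x ^ 2 / (x + 1)) Y
      = VY * rdiag ((fun x => a * x + x ^ 2 / (x + 1)) ∘ mu) * VYᴴ := hYmf _
  have hgYpsd : (matFun (fun x => a * x + x ^ 2 / (x + 1)) Y).PosSemidef := by
    rw [hgYdec]
    exact psd_decomp hgmu0
  have hLHS : eigValsDown (matFun (fun x => a * x + x ^ 2 / (x + 1)) Y)
      = (fun x => a * x + x ^ 2 / (x + 1)) ∘ mu := by
    obtain ⟨U3, h31, h32, h3dec, -⟩ := exists_sorted_decomp_matFun hgYpsd.1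
    refine sorted_decomp_unique h31 h32 hVY1 hVY2
      (eigValsDown_antitone hgYpsd.1) hgmu_anti (eigValsDown_nonneg hgYpsd) hgmu0 ?_
    rw [← h3dec, hgYdec]
  set W : Matrix (Fin n) (Fin n) ℂ := (1 + X)⁻¹ - (1 + X + Y)⁻¹ with hWdef
  have hD : matFun (fun x => a * x + x ^ 2 / (x + 1)) (X + Y)
        - matFun (fun x => a * x + x ^ 2 / (x + 1)) X
      = ((a + 1 : ℝ) : ℂ) • Y - W := by
    rw [matFun_g hXY a, matFun_g hX a, hWdef]
    have hassoc : (1 : Matrix (Fin n) (Fin n) ℂ) + (X + Y) = 1 + X + Y := by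
      rw [add_assoc]
    rw [hassoc, smul_add]
    abel
  have hDherm : (matFun (fun x => a * x + x ^ 2 / (x + 1)) (X + Y)
      - matFun (fun x => a * x + x ^ 2 / (x + 1)) X).IsHermitian := by
    rw [hD]
    refine Matrix.IsHermitian.sub ?_ hWherm
    show (((a + 1 : ℝ) : ℂ) • Y)ᴴ = ((a + 1 : ℝ) : ℂ) • Y
    rw [Matrix.conjTranspose_smul, hY.1]
    congr 1
    exact Complex.conj_ofReal _
  have hYVV : VYᴴ * Y * VY = rdiag mu := by
    conv_lhs => rw [hYdec]
    exact unitary_sandwich hVY1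
  have hentry : ∀ j : Fin n,
      ((VYᴴ * (matFun (fun x => a * x + x ^ 2 / (x + 1)) (X + Y)
        - matFun (fun x => a * x + x ^ 2 / (x + 1)) X) * VY) j j).re
      = (a + 1) * mu j - ((VYᴴ * W * VY) j j).re := by
    intro j
    rw [hD]
    have hsplit : VYᴴ * (((a + 1 : ℝ) : ℂ) • Y - W) * VY
        = ((a + 1 : ℝ) : ℂ) • (VYᴴ * Y * VY) - VYᴴ * W * VY := by
      rw [Matrix.mul_sub, Matrix.sub_mul, Matrix.mul_smul, Matrix.smul_mul]
    rw [hsplit, hYVV, Matrix.sub_apply, Matrix.smul_apply, rdiag, Matrix.diagonal_apply_eq,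
      Complex.sub_re]
    congr 1
    rw [smul_eq_mul, ← Complex.ofReal_mul, Complex.ofReal_re]
  rw [hLHS]
  calc ∑ j ∈ Finset.univ.filter (fun j : Fin n => (j : ℕ) < k),
        ((fun x => a * x + x ^ 2 / (x + 1)) ∘ mu) j
      = ∑ j ∈ Finset.univ.filter (fun j : Fin n => (j : ℕ) < k),
        ((a + 1) * mu j - (1 - (1 + mu j)⁻¹)) := by
        refine Finset.sum_congr rfl fun j _ => ?_
        exact gfun_eq' a (mu j) (hmu0 j)
    _ ≤ ∑ j ∈ Finset.univ.filter (fun j : Fin n => (j : ℕ) < k),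
        ((a + 1) * mu j) - ∑ j ∈ Finset.univ.filter (fun j : Fin n => (j : ℕ) < k),
        ((VYᴴ * W * VY) j j).re := by
        rw [Finset.sum_sub_distrib]
        refine sub_le_sub_left ?_ _
        calc ∑ j ∈ Finset.univ.filter (fun j : Fin n => (j : ℕ) < k),
              ((VYᴴ * W * VY) j j).re
            ≤ ∑ j ∈ Finset.univ.filter (fun j : Fin n => (j : ℕ) < k),
              eigValsDown W j := kyfan hWherm hVY1 hVY2 k
          _ ≤ ∑ j ∈ Finset.univ.filter (fun j : Fin n => (j : ℕ) < k),
              (1 - (1 + mu j)⁻¹) := Finset.sum_le_sum fun j _ => hWbound j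
    _ = ∑ j ∈ Finset.univ.filter (fun j : Fin n => (j : ℕ) < k),
        ((VYᴴ * (matFun (fun x => a * x + x ^ 2 / (x + 1)) (X + Y)
          - matFun (fun x => a * x + x ^ 2 / (x + 1)) X) * VY) j j).re := by
        rw [← Finset.sum_sub_distrib]
        exact Finset.sum_congr rfl fun j _ => (hentry j).symm
    _ ≤ ∑ j ∈ Finset.univ.filter (fun j : Fin n => (j : ℕ) < k),
        eigValsDown (matFun (fun x => a * x + x ^ 2 / (x + 1)) (X + Y)
          - matFun (fun x => a * x + x ^ 2 / (x + 1)) X) j :=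
        kyfan hDherm hVY1 hVY2 k
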